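/- Let a, b > 0 and let j > −1 and k > j + 1 be reals, and set f(s) = a·s^k and g(s) = b·s^j for s > 0. Define L(s₀) = 2∫_{s₀}^{∞} (g(s)/f(s))·f(s₀)/√(f(s)² − f(s₀)²) ds and E(s₀) = f(s₀)·L(s₀) + 2∫_{s₀}^{∞} (g(s)/f(s))·( √(f(s)² − f(s₀)²) − f(s) ) ds − 2∫_{0}^{s₀} g(s) ds. Then all these integrals converge, and for every λ > 0 and s₀ > 0 one has L(λs₀) = λ^{j+1−k}·L(s₀) and E(λs₀) = λ^{j+1}·E(s₀). Consequently the quantity E(s₀)·L(s₀)^{(j+1)/(k−j−1)} is independent of s₀, and L(s₀) → ∞ as s₀ → 0⁺. -/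

import Mathlib

open MeasureTheory Real Set Filter


/-- Bernoulli-type lower bound: `min 1 p * x^(p-1) * (x-1) ≤ x^p - 1` for `x ≥ 1`, `p > 0`. -/
lemma ng_pow_lb {p x : ℝ} (hp : 0 < p) (hx : 1 ≤ x) :
    min 1 p * (x ^ (p - 1) * (x - 1)) ≤ x ^ p - 1 := by
  have hx0 : (0:ℝ) < x := lt_of_lt_of_le one_pos hx
  have hxp : 0 < x ^ p := rpow_pos_of_pos hx0 p
  have hmulx : x ^ (p - 1) * x = x ^ p := by
    rw [← Real.rpow_add_one hx0.ne' (p - 1)]; ring_nf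
  rcases le_total 1 p with h1 | h1
  · rw [min_eq_left h1, one_mul]
    have h2 : (1:ℝ) ≤ x ^ (p - 1) := by
      have := Real.rpow_le_rpow_of_exponent_le hx (by linarith : (0:ℝ) ≤ p - 1)
      rwa [Real.rpow_zero] at this
    nlinarith
  · rw [min_eq_right h1]
    have hB : (x⁻¹) ^ p ≤ 1 + p * (x⁻¹ - 1) := by
      have := rpow_one_add_le_one_add_mul_self (s := x⁻¹ - 1)
        (by nlinarith [inv_nonneg.mpr hx0.le]) hp.le h1
      simpa using this
    rw [Real.inv_rpow hx0.le] at hB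
    have h3 : 1 ≤ x ^ p * (1 + p * (x⁻¹ - 1)) := by
      calc (1:ℝ) = x ^ p * (x ^ p)⁻¹ := (mul_inv_cancel₀ hxp.ne').symm
        _ ≤ x ^ p * (1 + p * (x⁻¹ - 1)) := mul_le_mul_of_nonneg_left hB hxp.le
    have h4 : x ^ p * x⁻¹ = x ^ (p - 1) := by
      rw [Real.rpow_sub_one hx0.ne']; ring
    have hxi : x * x⁻¹ = 1 := mul_inv_cancel₀ hx0.ne'
    nlinarith

/-- Key lower bound `min 1 (2k) * s^(2k-1) * (s - s₀) ≤ s^(2k) - s₀^(2k)`. -/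
lemma ng_key {k s₀ s : ℝ} (hk : 0 < k) (h0 : 0 < s₀) (hs : s₀ ≤ s) :
    min 1 (2*k) * (s ^ (2*k - 1) * (s - s₀)) ≤ s ^ (2*k) - s₀ ^ (2*k) := by
  have hs0 : 0 < s := lt_of_lt_of_le h0 hs
  have hx : 1 ≤ s / s₀ := (one_le_div h0).mpr hs
  have main := ng_pow_lb (p := 2*k) (by positivity) hx
  rw [Real.div_rpow hs0.le h0.le, Real.div_rpow hs0.le h0.le] at main
  have hA : 0 < s ^ (2*k - 1) := rpow_pos_of_pos hs0 _
  have hB : 0 < s₀ ^ (2*k - 1) := rpow_pos_of_pos h0 _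
  have hQ : s₀ ^ (2*k) = s₀ ^ (2*k - 1) * s₀ := by
    rw [← Real.rpow_add_one h0.ne' (2*k - 1)]; ring_nf
  have hP : 0 < s₀ ^ (2*k) := rpow_pos_of_pos h0 _
  calc min 1 (2*k) * (s ^ (2*k - 1) * (s - s₀))
      = min 1 (2*k) * (s ^ (2*k - 1) / s₀ ^ (2*k - 1) * (s / s₀ - 1)) * (s₀ ^ (2*k - 1) * s₀) := by
        field_simp
    _ ≤ (s ^ (2*k) / s₀ ^ (2*k) - 1) * (s₀ ^ (2*k - 1) * s₀) :=
        mul_le_mul_of_nonneg_right main (by positivity)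
    _ = s ^ (2*k) - s₀ ^ (2*k) := by rw [← hQ]; field_simp

/-- `√(s^(2k) - s₀^(2k)) ≤ s^k`. -/
lemma ng_sqrt_le {k s₀ s : ℝ} (hk : 0 < k) (h0 : 0 < s₀) (hs : s₀ ≤ s) :
    Real.sqrt (s ^ (2*k) - s₀ ^ (2*k)) ≤ s ^ k := by
  have hs0 : 0 < s := lt_of_lt_of_le h0 hs
  have h2 : s ^ k * s ^ k = s ^ (2*k) := by
    rw [← Real.rpow_add hs0]; ring_nf
  calc Real.sqrt (s ^ (2*k) - s₀ ^ (2*k)) ≤ Real.sqrt (s ^ (2*k)) := by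
        apply Real.sqrt_le_sqrt
        have : 0 < s₀ ^ (2*k) := rpow_pos_of_pos h0 _
        linarith
    _ = s ^ k := by rw [← h2, Real.sqrt_mul_self (by positivity)]

/-- `s^k - √(s^(2k) - s₀^(2k)) ≤ s₀^(2k) / s^k`. -/
lemma ng_sqrt_sub_le {k s₀ s : ℝ} (hk : 0 < k) (h0 : 0 < s₀) (hs : s₀ ≤ s) :
    s ^ k - Real.sqrt (s ^ (2*k) - s₀ ^ (2*k)) ≤ s₀ ^ (2*k) / s ^ k := by
  have hs0 : 0 < s := lt_of_lt_of_le h0 hs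
  have hBp : 0 < s ^ k := rpow_pos_of_pos hs0 _
  have hcp : 0 < s₀ ^ (2*k) := rpow_pos_of_pos h0 _
  have h2 : s ^ k * s ^ k = s ^ (2*k) := by
    rw [← Real.rpow_add hs0]; ring_nf
  have hcB : s₀ ^ (2*k) ≤ s ^ (2*k) := Real.rpow_le_rpow h0.le hs (by positivity)
  set B := s ^ k
  set c := s₀ ^ (2*k)
  have key : B - c / B ≤ Real.sqrt (s ^ (2*k) - c) := by
    rcases le_or_gt (B - c / B) 0 with h | h
    · exact h.trans (Real.sqrt_nonneg _)
    · rw [Real.le_sqrt h.le (by linarith)]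
      have e1 : c / B * B = c := div_mul_cancel₀ _ hBp.ne'
      nlinarith [sq_nonneg (c / B), div_pos hcp hBp]
  linarith

noncomputable def ngG (j k s₀ : ℝ) : ℝ → ℝ :=
  fun s => s ^ j * s₀ ^ k / (s ^ k * Real.sqrt (s ^ (2*k) - s₀ ^ (2*k)))

noncomputable def ngH (j k s₀ : ℝ) : ℝ → ℝ :=
  fun s => s ^ j / s ^ k * (Real.sqrt (s ^ (2*k) - s₀ ^ (2*k)) - s ^ k)

lemma ng_two_rpow {s : ℝ} (hs : 0 < s) (k : ℝ) : s ^ k * s ^ k = s ^ (2*k) := by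
  rw [← Real.rpow_add hs]; ring_nf

lemma ng_X_pos {k s₀ s : ℝ} (hk : 0 < k) (h0 : 0 < s₀) (hs : s₀ < s) :
    0 < s ^ (2*k) - s₀ ^ (2*k) :=
  sub_pos.mpr (Real.rpow_lt_rpow h0.le hs (by positivity))

lemma ngG_contOn {j k s₀ : ℝ} (hk : 0 < k) (h0 : 0 < s₀) :
    ContinuousOn (ngG j k s₀) (Ioi s₀) := by
  have hrc : ∀ q : ℝ, ContinuousOn (fun s : ℝ => s ^ q) (Ioi s₀) := fun q x hx =>
    (Real.continuousAt_rpow_const x q (Or.inl (ne_of_gt (lt_trans h0 hx)))).continuousWithinAt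
  apply ContinuousOn.div
  · exact (hrc j).mul continuousOn_const
  · exact (hrc k).mul (Real.continuous_sqrt.comp_continuousOn ((hrc (2*k)).sub continuousOn_const))
  · intro x hx
    have h1 : 0 < x ^ k := Real.rpow_pos_of_pos (lt_trans h0 hx) k
    have h2 : 0 < Real.sqrt (x ^ (2*k) - s₀ ^ (2*k)) :=
      Real.sqrt_pos.mpr (ng_X_pos hk h0 hx)
    positivity

lemma ngH_contOn {j k s₀ : ℝ} (hk : 0 < k) (h0 : 0 < s₀) :
    ContinuousOn (ngH j k s₀) (Ioi s₀) := by
  have hrc : ∀ q : ℝ, ContinuousOn (fun s : ℝ => s ^ q) (Ioi s₀) := fun q x hx =>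
    (Real.continuousAt_rpow_const x q (Or.inl (ne_of_gt (lt_trans h0 hx)))).continuousWithinAt
  apply ContinuousOn.mul
  · apply ContinuousOn.div (hrc j) (hrc k)
    intro x hx
    exact (Real.rpow_pos_of_pos (lt_trans h0 hx) k).ne'
  · exact (Real.continuous_sqrt.comp_continuousOn ((hrc (2*k)).sub continuousOn_const)).sub (hrc k)

lemma ngG_nonneg {j k s₀ : ℝ} (h0 : 0 ≤ s₀) (s : ℝ) (hs : 0 ≤ s) : 0 ≤ ngG j k s₀ s := by
  unfold ngG
  have := Real.sqrt_nonneg (s ^ (2*k) - s₀ ^ (2*k))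
  have h1 : (0:ℝ) ≤ s ^ j := Real.rpow_nonneg hs j
  have h2 : (0:ℝ) ≤ s ^ k := Real.rpow_nonneg hs k
  have h3 : (0:ℝ) ≤ s₀ ^ k := Real.rpow_nonneg h0 k
  positivity

lemma ngG_int {j k s₀ : ℝ} (hk : 0 < k) (hjk : j - 2*k < -1) (h0 : 0 < s₀) :
    IntegrableOn (ngG j k s₀) (Ioi s₀) := by
  have hsub : Ioc s₀ (2*s₀) ∪ Ioi (2*s₀) = Ioi s₀ := Ioc_union_Ioi_eq_Ioi (by linarith)
  rw [← hsub]
  apply MeasureTheory.IntegrableOn.union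
  set m2 : ℝ := min (s₀ ^ (2*k-1)) ((2*s₀) ^ (2*k-1)) with hm2
  have hm2p : 0 < m2 := lt_min (Real.rpow_pos_of_pos h0 _) (Real.rpow_pos_of_pos (by linarith) _)
  set c₀ : ℝ := min 1 (2*k) * m2 with hc₀
  have hc₀p : 0 < c₀ := mul_pos (lt_min one_pos (by linarith)) hm2p
  set Mj : ℝ := max (s₀ ^ j) ((2*s₀) ^ j) with hMj
  have hMjp : 0 < Mj := lt_max_of_lt_left (Real.rpow_pos_of_pos h0 _)
  · -- on Ioc s₀ (2*s₀)
    have hcomp : IntegrableOn (fun s => (Mj / Real.sqrt c₀) * (s - s₀) ^ (-(1/2) : ℝ))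
        (Ioc s₀ (2*s₀)) := by
      have base : IntervalIntegrable (fun x : ℝ => x ^ (-(1/2) : ℝ)) volume 0 s₀ :=
        intervalIntegral.intervalIntegrable_rpow' (by norm_num)
      have shifted := base.comp_sub_right s₀
      rw [zero_add] at shifted
      have : IntegrableOn (fun x : ℝ => (x - s₀) ^ (-(1/2) : ℝ)) (Ioc s₀ (s₀ + s₀)) :=
        (intervalIntegrable_iff_integrableOn_Ioc_of_le (by linarith)).mp shifted
      rw [show s₀ + s₀ = 2*s₀ by ring] at this
      exact this.const_mul _
    apply hcomp.mono' (((ngG_contOn hk h0).mono Ioc_subset_Ioi_self).aestronglyMeasurable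
      measurableSet_Ioc)
    rw [ae_restrict_iff' measurableSet_Ioc]
    apply ae_of_all
    rintro s ⟨hs1, hs2⟩
    have hs0 : 0 < s := lt_trans h0 hs1
    have hXk := ng_key hk h0 hs1.le
    have hm2le : m2 ≤ s ^ (2*k-1) := by
      rcases le_or_gt 0 (2*k-1) with h | h
      · exact (min_le_left _ _).trans (Real.rpow_le_rpow h0.le hs1.le h)
      · exact (min_le_right _ _).trans (Real.rpow_le_rpow_of_nonpos hs0 hs2 h.le)
    have hX2 : c₀ * (s - s₀) ≤ s ^ (2*k) - s₀ ^ (2*k) := by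
      have h1 : c₀ * (s - s₀) ≤ min 1 (2*k) * (s ^ (2*k-1) * (s - s₀)) := by
        rw [hc₀]
        have := mul_le_mul_of_nonneg_right hm2le (le_of_lt (sub_pos.mpr hs1))
        nlinarith [le_min one_pos.le (by linarith : (0:ℝ) ≤ 2*k), min_le_left (1:ℝ) (2*k)]
      exact h1.trans hXk
    have hsqrtX : Real.sqrt c₀ * Real.sqrt (s - s₀) ≤ Real.sqrt (s ^ (2*k) - s₀ ^ (2*k)) := by
      rw [← Real.sqrt_mul hc₀p.le]
      exact Real.sqrt_le_sqrt hX2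
    have hnum : s ^ j ≤ Mj := by
      rcases le_or_gt 0 j with h | h
      · exact (Real.rpow_le_rpow hs0.le hs2 h).trans (le_max_right _ _)
      · exact (Real.rpow_le_rpow_of_nonpos h0 hs1.le h.le).trans (le_max_left _ _)
    have hden : 0 < s₀ ^ k * (Real.sqrt c₀ * Real.sqrt (s - s₀)) := by
      have := Real.sqrt_pos.mpr hc₀p
      have := Real.sqrt_pos.mpr (sub_pos.mpr hs1)
      positivity
    have hdenle : s₀ ^ k * (Real.sqrt c₀ * Real.sqrt (s - s₀))
        ≤ s ^ k * Real.sqrt (s ^ (2*k) - s₀ ^ (2*k)) :=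
      mul_le_mul (Real.rpow_le_rpow h0.le hs1.le hk.le) hsqrtX (by positivity)
        (Real.rpow_nonneg hs0.le k)
    have hGle : ngG j k s₀ s ≤ Mj * s₀ ^ k / (s₀ ^ k * (Real.sqrt c₀ * Real.sqrt (s - s₀))) := by
      unfold ngG
      apply div_le_div₀ (by positivity) (mul_le_mul_of_nonneg_right hnum
        (Real.rpow_nonneg h0.le k)) hden hdenle
    have heq : Mj * s₀ ^ k / (s₀ ^ k * (Real.sqrt c₀ * Real.sqrt (s - s₀)))
        = (Mj / Real.sqrt c₀) * (s - s₀) ^ (-(1/2) : ℝ) := by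
      rw [Real.rpow_neg (by linarith), ← Real.sqrt_eq_rpow]
      have h1 : (0:ℝ) < s₀ ^ k := Real.rpow_pos_of_pos h0 k
      have h2 : (0:ℝ) < Real.sqrt c₀ := Real.sqrt_pos.mpr hc₀p
      have h3 : (0:ℝ) < Real.sqrt (s - s₀) := Real.sqrt_pos.mpr (sub_pos.mpr hs1)
      field_simp
    rw [Real.norm_eq_abs, abs_of_nonneg (ngG_nonneg h0.le s hs0.le)]
    rw [← heq]
    exact hGle
  · -- on Ioi (2*s₀)
    have h1 : (1:ℝ) < (2:ℝ) ^ (2*k) := by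
      rw [show (1:ℝ) = (1:ℝ) ^ (2*k) from (Real.one_rpow _).symm]
      exact Real.rpow_lt_rpow (by norm_num) one_lt_two (by linarith)
    set d : ℝ := 1 - ((2:ℝ) ^ (2*k))⁻¹ with hdd
    have hd : (0:ℝ) < d := by
      have h2 : ((2:ℝ) ^ (2*k))⁻¹ < 1 := by
        rw [inv_lt_one_iff₀]; right; exact h1
      simp only [hdd]; linarith
    have hcomp : IntegrableOn (fun s : ℝ => (s₀ ^ k / Real.sqrt d) * s ^ (j - 2*k))
        (Ioi (2*s₀)) :=
      (integrableOn_Ioi_rpow_of_lt hjk (by linarith)).const_mul _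
    apply hcomp.mono' (((ngG_contOn hk h0).mono (Ioi_subset_Ioi (by linarith))).aestronglyMeasurable
      measurableSet_Ioi)
    rw [ae_restrict_iff' measurableSet_Ioi]
    apply ae_of_all
    intro s hs
    rw [mem_Ioi] at hs
    have hs0 : 0 < s := by linarith
    have hXge : d * s ^ (2*k) ≤ s ^ (2*k) - s₀ ^ (2*k) := by
      have hhalf : s₀ ≤ s / 2 := by linarith
      have h2 : s₀ ^ (2*k) ≤ (s/2) ^ (2*k) := Real.rpow_le_rpow h0.le hhalf (by linarith)
      have h3 : (s/2) ^ (2*k) = s ^ (2*k) / (2:ℝ) ^ (2*k) := Real.div_rpow hs0.le (by norm_num) _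
      have h4 : (0:ℝ) < (2:ℝ) ^ (2*k) := by linarith
      rw [hdd]
      rw [h3] at h2
      have h5 : s ^ (2*k) / (2:ℝ) ^ (2*k) = s ^ (2*k) * ((2:ℝ) ^ (2*k))⁻¹ := by ring
      nlinarith [Real.rpow_pos_of_pos hs0 (2*k)]
    have hsq : Real.sqrt d * s ^ k ≤ Real.sqrt (s ^ (2*k) - s₀ ^ (2*k)) := by
      have : Real.sqrt (d * s ^ (2*k)) = Real.sqrt d * s ^ k := by
        rw [Real.sqrt_mul hd.le, ← ng_two_rpow hs0 k, Real.sqrt_mul_self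
          (Real.rpow_nonneg hs0.le k)]
      rw [← this]
      exact Real.sqrt_le_sqrt hXge
    have hskp : (0:ℝ) < s ^ k := Real.rpow_pos_of_pos hs0 k
    have hsdp : (0:ℝ) < Real.sqrt d := Real.sqrt_pos.mpr hd
    have hden : (0:ℝ) < s ^ k * (Real.sqrt d * s ^ k) := by positivity
    have hGle : ngG j k s₀ s ≤ s ^ j * s₀ ^ k / (s ^ k * (Real.sqrt d * s ^ k)) := by
      unfold ngG
      apply div_le_div₀ (by positivity) le_rfl hden
      exact mul_le_mul_of_nonneg_left hsq hskp.le
    have heq : s ^ j * s₀ ^ k / (s ^ k * (Real.sqrt d * s ^ k))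
        = (s₀ ^ k / Real.sqrt d) * s ^ (j - 2*k) := by
      rw [Real.rpow_sub hs0, ← ng_two_rpow hs0 k]
      field_simp
    rw [Real.norm_eq_abs, abs_of_nonneg (ngG_nonneg h0.le s hs0.le), ← heq]
    exact hGle

lemma ngH_int {j k s₀ : ℝ} (hk : 0 < k) (hjk : j - 2*k < -1) (h0 : 0 < s₀) :
    IntegrableOn (ngH j k s₀) (Ioi s₀) := by
  have hcomp : IntegrableOn (fun s : ℝ => s₀ ^ (2*k) * s ^ (j - 2*k)) (Ioi s₀) :=
    (integrableOn_Ioi_rpow_of_lt hjk h0).const_mul _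
  apply hcomp.mono' ((ngH_contOn hk h0).aestronglyMeasurable measurableSet_Ioi)
  rw [ae_restrict_iff' measurableSet_Ioi]
  apply ae_of_all
  intro s hs
  rw [mem_Ioi] at hs
  have hs0 : 0 < s := lt_trans h0 hs
  have hskp : (0:ℝ) < s ^ k := Real.rpow_pos_of_pos hs0 k
  have hsjp : (0:ℝ) < s ^ j := Real.rpow_pos_of_pos hs0 j
  have hle := ng_sqrt_le hk h0 hs.le
  have hle2 := ng_sqrt_sub_le hk h0 hs.le
  unfold ngH
  rw [Real.norm_eq_abs, abs_mul, abs_of_nonneg (by positivity : (0:ℝ) ≤ s ^ j / s ^ k),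
    abs_of_nonpos (by linarith : Real.sqrt (s ^ (2*k) - s₀ ^ (2*k)) - s ^ k ≤ 0)]
  have hstep : s ^ j / s ^ k * -(Real.sqrt (s ^ (2*k) - s₀ ^ (2*k)) - s ^ k)
      ≤ s ^ j / s ^ k * (s₀ ^ (2*k) / s ^ k) := by
    apply mul_le_mul_of_nonneg_left (by linarith) (by positivity)
  have heq : s ^ j / s ^ k * (s₀ ^ (2*k) / s ^ k) = s₀ ^ (2*k) * s ^ (j - 2*k) := by
    rw [Real.rpow_sub hs0, ← ng_two_rpow hs0 k]
    field_simp
  rw [← heq]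
  exact hstep

lemma ng_g_int {j b s₀ : ℝ} (hj : -1 < j) (h0 : 0 < s₀) :
    IntegrableOn (fun s : ℝ => b * s ^ j) (Ioo 0 s₀) :=
  ((intervalIntegral.integrableOn_Ioo_rpow_iff h0).mpr hj).const_mul b

lemma ng_eq1 {a b j k s₀ : ℝ} (ha : 0 < a) (hk : 0 < k) (h0 : 0 < s₀) {s : ℝ} (hs : s₀ < s) :
    b * s ^ j / (a * s ^ k) * (a * s₀ ^ k) / Real.sqrt ((a * s ^ k) ^ 2 - (a * s₀ ^ k) ^ 2)
      = (b / a) * ngG j k s₀ s := by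
  have hs0 : 0 < s := lt_trans h0 hs
  have e : (a * s ^ k) ^ 2 - (a * s₀ ^ k) ^ 2 = a ^ 2 * (s ^ (2*k) - s₀ ^ (2*k)) := by
    rw [mul_pow, mul_pow, sq (s ^ k), sq (s₀ ^ k), ng_two_rpow hs0, ng_two_rpow h0]
    ring
  rw [e, show a ^ 2 * (s ^ (2*k) - s₀ ^ (2*k)) = a ^ 2 * (s ^ (2*k) - s₀ ^ (2*k)) from rfl,
    Real.sqrt_mul (sq_nonneg a), Real.sqrt_sq ha.le]
  have hX : 0 < Real.sqrt (s ^ (2*k) - s₀ ^ (2*k)) := Real.sqrt_pos.mpr (ng_X_pos hk h0 hs)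
  have hk1 : (0:ℝ) < s ^ k := Real.rpow_pos_of_pos hs0 k
  unfold ngG
  field_simp

lemma ng_eq2 {a b j k s₀ : ℝ} (ha : 0 < a) (hk : 0 < k) (h0 : 0 < s₀) {s : ℝ} (hs : s₀ < s) :
    b * s ^ j / (a * s ^ k) * (Real.sqrt ((a * s ^ k) ^ 2 - (a * s₀ ^ k) ^ 2) - a * s ^ k)
      = b * ngH j k s₀ s := by
  have hs0 : 0 < s := lt_trans h0 hs
  have e : (a * s ^ k) ^ 2 - (a * s₀ ^ k) ^ 2 = a ^ 2 * (s ^ (2*k) - s₀ ^ (2*k)) := by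
    rw [mul_pow, mul_pow, sq (s ^ k), sq (s₀ ^ k), ng_two_rpow hs0, ng_two_rpow h0]
    ring
  rw [e, Real.sqrt_mul (sq_nonneg a), Real.sqrt_sq ha.le]
  have hk1 : (0:ℝ) < s ^ k := Real.rpow_pos_of_pos hs0 k
  unfold ngH
  field_simp

lemma ng_sqrt_rpow_two {lam : ℝ} (hlam : 0 < lam) (k : ℝ) :
    Real.sqrt (lam ^ (2*k)) = lam ^ k := by
  rw [← ng_two_rpow hlam k, Real.sqrt_mul_self (Real.rpow_nonneg hlam.le k)]

lemma ngG_scale {j k s₀ lam : ℝ} (hk : 0 < k) (hlam : 0 < lam) (h0 : 0 < s₀) {u : ℝ} (hu : s₀ < u) :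
    ngG j k (lam * s₀) (lam * u) = lam ^ (j - k) * ngG j k s₀ u := by
  have hu0 : 0 < u := lt_trans h0 hu
  unfold ngG
  simp only [Real.mul_rpow hlam.le hu0.le, Real.mul_rpow hlam.le h0.le]
  have e : lam ^ (2*k) * u ^ (2*k) - lam ^ (2*k) * s₀ ^ (2*k)
      = lam ^ (2*k) * (u ^ (2*k) - s₀ ^ (2*k)) := by ring
  rw [e, Real.sqrt_mul (Real.rpow_nonneg hlam.le _), ng_sqrt_rpow_two hlam]
  have hX : 0 < Real.sqrt (u ^ (2*k) - s₀ ^ (2*k)) :=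
    Real.sqrt_pos.mpr (ng_X_pos hk h0 hu)
  rw [Real.rpow_sub hlam]
  have hlk : (0:ℝ) < lam ^ k := Real.rpow_pos_of_pos hlam k
  have hlj : (0:ℝ) < lam ^ j := Real.rpow_pos_of_pos hlam j
  have huk : (0:ℝ) < u ^ k := Real.rpow_pos_of_pos hu0 k
  field_simp

lemma ngH_scale {j k s₀ lam : ℝ} (hk : 0 < k) (hlam : 0 < lam) (h0 : 0 < s₀) {u : ℝ}
    (hu : s₀ < u) :
    ngH j k (lam * s₀) (lam * u) = lam ^ j * ngH j k s₀ u := by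
  have hu0 : 0 < u := lt_trans h0 hu
  unfold ngH
  simp only [Real.mul_rpow hlam.le hu0.le, Real.mul_rpow hlam.le h0.le]
  have e : lam ^ (2*k) * u ^ (2*k) - lam ^ (2*k) * s₀ ^ (2*k)
      = lam ^ (2*k) * (u ^ (2*k) - s₀ ^ (2*k)) := by ring
  rw [e, Real.sqrt_mul (Real.rpow_nonneg hlam.le _), ng_sqrt_rpow_two hlam]
  have hlk : (0:ℝ) < lam ^ k := Real.rpow_pos_of_pos hlam k
  have hlj : (0:ℝ) < lam ^ j := Real.rpow_pos_of_pos hlam j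
  have huk : (0:ℝ) < u ^ k := Real.rpow_pos_of_pos hu0 k
  field_simp

lemma ngG_integral_scale {j k s₀ lam : ℝ} (hk : 0 < k) (hlam : 0 < lam) (h0 : 0 < s₀) :
    ∫ s in Ioi (lam * s₀), ngG j k (lam * s₀) s
      = lam ^ (j + 1 - k) * ∫ s in Ioi s₀, ngG j k s₀ s := by
  have h := MeasureTheory.integral_comp_mul_left_Ioi (ngG j k (lam * s₀)) s₀ hlam
  have h2 : (∫ x in Ioi s₀, ngG j k (lam * s₀) (lam * x))
      = ∫ x in Ioi s₀, lam ^ (j - k) * ngG j k s₀ x :=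
    setIntegral_congr_fun measurableSet_Ioi (fun x hx => ngG_scale hk hlam h0 hx)
  rw [h2, MeasureTheory.integral_const_mul] at h
  have h3 : (∫ s in Ioi (lam * s₀), ngG j k (lam * s₀) s)
      = lam * (lam ^ (j - k) * ∫ x in Ioi s₀, ngG j k s₀ x) := by
    rw [h, smul_eq_mul, ← mul_assoc, mul_inv_cancel₀ hlam.ne', one_mul]
  rw [h3, show j + 1 - k = (j - k) + 1 by ring, Real.rpow_add_one hlam.ne']
  ring

lemma ngH_integral_scale {j k s₀ lam : ℝ} (hk : 0 < k) (hlam : 0 < lam) (h0 : 0 < s₀) :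
    ∫ s in Ioi (lam * s₀), ngH j k (lam * s₀) s
      = lam ^ (j + 1) * ∫ s in Ioi s₀, ngH j k s₀ s := by
  have h := MeasureTheory.integral_comp_mul_left_Ioi (ngH j k (lam * s₀)) s₀ hlam
  have h2 : (∫ x in Ioi s₀, ngH j k (lam * s₀) (lam * x))
      = ∫ x in Ioi s₀, lam ^ j * ngH j k s₀ x :=
    setIntegral_congr_fun measurableSet_Ioi (fun x hx => ngH_scale hk hlam h0 hx)
  rw [h2, MeasureTheory.integral_const_mul] at h
  have h3 : (∫ s in Ioi (lam * s₀), ngH j k (lam * s₀) s)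
      = lam * (lam ^ j * ∫ x in Ioi s₀, ngH j k s₀ x) := by
    rw [h, smul_eq_mul, ← mul_assoc, mul_inv_cancel₀ hlam.ne', one_mul]
  rw [h3, Real.rpow_add_one hlam.ne']
  ring

lemma ng_g_integral {b j c : ℝ} (hj : -1 < j) (hc : 0 < c) :
    ∫ s in Ioo (0:ℝ) c, b * s ^ j = b * c ^ (j + 1) / (j + 1) := by
  rw [← MeasureTheory.integral_Ioc_eq_integral_Ioo, ← intervalIntegral.integral_of_le hc.le,
    intervalIntegral.integral_const_mul, integral_rpow (Or.inl hj),
    Real.zero_rpow (by linarith : j + 1 ≠ 0)]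
  ring

/-- Power-law scaling of the Nambu–Goto separation and renormalized energy for
`f(s) = a·s^k`, `g(s) = b·s^j` with `a, b > 0`, `j > −1`, `k > j + 1`: all defining
integrals converge, `L(λs₀) = λ^{j+1−k}·L(s₀)`, `E(λs₀) = λ^{j+1}·E(s₀)`, the quantity
`E(s₀)·L(s₀)^{(j+1)/(k−j−1)}` is independent of `s₀`, and `L(s₀) → ∞` as `s₀ → 0⁺`. -/
theorem nambu_goto_power_law_scaling (a b j k : ℝ) (ha : 0 < a) (hb : 0 < b)
    (hj : -1 < j) (hk : j + 1 < k) (f g L E : ℝ → ℝ)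
    (hf : ∀ s, f s = a * s ^ k) (hg : ∀ s, g s = b * s ^ j)
    (hL : ∀ s₀, L s₀ = 2 * ∫ s in Ioi s₀,
      (g s / f s) * f s₀ / Real.sqrt ((f s) ^ 2 - (f s₀) ^ 2))
    (hE : ∀ s₀, E s₀ = f s₀ * L s₀
      + 2 * (∫ s in Ioi s₀, (g s / f s) * (Real.sqrt ((f s) ^ 2 - (f s₀) ^ 2) - f s))
      - 2 * ∫ s in Ioo 0 s₀, g s) :
    (∀ s₀ : ℝ, 0 < s₀ →
      IntegrableOn (fun s => (g s / f s) * f s₀ / Real.sqrt ((f s) ^ 2 - (f s₀) ^ 2))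
          (Ioi s₀) ∧
      IntegrableOn (fun s => (g s / f s) * (Real.sqrt ((f s) ^ 2 - (f s₀) ^ 2) - f s))
          (Ioi s₀) ∧
      IntegrableOn g (Ioo 0 s₀)) ∧
    (∀ lam : ℝ, 0 < lam → ∀ s₀ : ℝ, 0 < s₀ →
      L (lam * s₀) = lam ^ (j + 1 - k) * L s₀ ∧
      E (lam * s₀) = lam ^ (j + 1) * E s₀) ∧
    (∀ s₀ s₁ : ℝ, 0 < s₀ → 0 < s₁ →
      E s₀ * L s₀ ^ ((j + 1) / (k - j - 1)) = E s₁ * L s₁ ^ ((j + 1) / (k - j - 1))) ∧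
    Tendsto L (nhdsWithin 0 (Ioi 0)) atTop := by
  have hk0 : 0 < k := by linarith
  have hjk2 : j - 2*k < -1 := by linarith
  -- pointwise identifications of the integrands
  have hI1 : ∀ s₀ : ℝ, 0 < s₀ →
      EqOn (fun s => (b/a) * ngG j k s₀ s)
        (fun s => (g s / f s) * f s₀ / Real.sqrt ((f s) ^ 2 - (f s₀) ^ 2)) (Ioi s₀) := by
    intro s₀ h0 s hs
    simp only [hf, hg]
    exact (ng_eq1 ha hk0 h0 hs).symm
  have hI2 : ∀ s₀ : ℝ, 0 < s₀ →
      EqOn (fun s => b * ngH j k s₀ s)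
        (fun s => (g s / f s) * (Real.sqrt ((f s) ^ 2 - (f s₀) ^ 2) - f s)) (Ioi s₀) := by
    intro s₀ h0 s hs
    simp only [hf, hg]
    exact (ng_eq2 ha hk0 h0 hs).symm
  -- integral identifications
  have hLval : ∀ s₀ : ℝ, 0 < s₀ → L s₀ = 2 * ((b/a) * ∫ s in Ioi s₀, ngG j k s₀ s) := by
    intro s₀ h0
    rw [hL s₀]
    congr 1
    rw [← MeasureTheory.integral_const_mul]
    exact (setIntegral_congr_fun measurableSet_Ioi (hI1 s₀ h0)).symm
  have hI2int : ∀ s₀ : ℝ, 0 < s₀ →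
      (∫ s in Ioi s₀, (g s / f s) * (Real.sqrt ((f s) ^ 2 - (f s₀) ^ 2) - f s))
        = b * ∫ s in Ioi s₀, ngH j k s₀ s := by
    intro s₀ h0
    rw [← MeasureTheory.integral_const_mul]
    exact (setIntegral_congr_fun measurableSet_Ioi (hI2 s₀ h0)).symm
  have hGint : ∀ s₀ : ℝ, 0 < s₀ → (∫ s in Ioo 0 s₀, g s) = b * s₀ ^ (j+1) / (j+1) := by
    intro s₀ h0
    rw [setIntegral_congr_fun measurableSet_Ioo (fun s _ => hg s), ng_g_integral hj h0]
  -- Part 2: scaling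
  have part2 : ∀ lam : ℝ, 0 < lam → ∀ s₀ : ℝ, 0 < s₀ →
      L (lam * s₀) = lam ^ (j + 1 - k) * L s₀ ∧ E (lam * s₀) = lam ^ (j + 1) * E s₀ := by
    intro lam hlam s₀ h0
    have hls : 0 < lam * s₀ := mul_pos hlam h0
    have hLs : L (lam * s₀) = lam ^ (j + 1 - k) * L s₀ := by
      rw [hLval _ hls, hLval _ h0, ngG_integral_scale hk0 hlam h0]
      ring
    refine ⟨hLs, ?_⟩
    have he : lam ^ (j+1) = lam ^ k * lam ^ (j+1-k) := by
      rw [← Real.rpow_add hlam]; ring_nf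
    have hmr : (lam * s₀) ^ k = lam ^ k * s₀ ^ k := Real.mul_rpow hlam.le h0.le
    have hmr2 : (lam * s₀) ^ (j+1) = lam ^ (j+1) * s₀ ^ (j+1) := Real.mul_rpow hlam.le h0.le
    rw [hE (lam * s₀), hE s₀, hI2int _ hls, hI2int _ h0, hGint _ hls, hGint _ h0, hLs,
      hf (lam * s₀), hf s₀, ngH_integral_scale hk0 hlam h0, hmr, hmr2, he]
    ring
  -- nonnegativity / positivity of L
  have hLnn : ∀ s₀ : ℝ, 0 < s₀ → 0 ≤ L s₀ := by
    intro s₀ h0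
    rw [hLval s₀ h0]
    have hnn : 0 ≤ ∫ s in Ioi s₀, ngG j k s₀ s :=
      setIntegral_nonneg measurableSet_Ioi
        (fun x hx => ngG_nonneg h0.le x (le_of_lt (lt_trans h0 (mem_Ioi.mp hx))))
    have hba : 0 ≤ b / a := le_of_lt (div_pos hb ha)
    positivity
  refine ⟨?_, part2, ?_, ?_⟩
  · -- Part 1: integrability
    intro s₀ h0
    refine ⟨?_, ?_, ?_⟩
    · exact MeasureTheory.IntegrableOn.congr_fun ((ngG_int hk0 hjk2 h0).const_mul (b/a)) (hI1 s₀ h0) measurableSet_Ioi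
    · exact MeasureTheory.IntegrableOn.congr_fun ((ngH_int hk0 hjk2 h0).const_mul b) (hI2 s₀ h0) measurableSet_Ioi
    · exact MeasureTheory.IntegrableOn.congr_fun (ng_g_int hj h0) (fun s _ => (hg s).symm) measurableSet_Ioo
  · -- Part 3: constancy
    intro s₀ s₁ h0 h1
    have hlam : 0 < s₁ / s₀ := div_pos h1 h0
    have hs1 : s₁ = (s₁ / s₀) * s₀ := (div_mul_cancel₀ s₁ h0.ne').symm
    obtain ⟨hLsc, hEsc⟩ := part2 (s₁ / s₀) hlam s₀ h0
    set lam := s₁ / s₀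
    set p := (j + 1) / (k - j - 1) with hp
    have hkj : (0:ℝ) < k - j - 1 := by linarith
    have hrw : (lam ^ (j+1-k) * L s₀) ^ p = lam ^ (-(j+1)) * L s₀ ^ p := by
      rw [Real.mul_rpow (Real.rpow_nonneg hlam.le _) (hLnn s₀ h0),
        ← Real.rpow_mul hlam.le, show (j+1-k) * p = -(j+1) by
          rw [hp]; field_simp; ring]
    have hone : lam ^ (j+1) * lam ^ (-(j+1)) = 1 := by
      rw [← Real.rpow_add hlam, show j + 1 + -(j+1) = 0 by ring, Real.rpow_zero]
    rw [hs1, hEsc, hLsc, hrw]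
    linear_combination (-(E s₀ * L s₀ ^ p)) * hone
  · -- Part 4: divergence of L at 0⁺
    have hL1pos : 0 < L 1 := by
      rw [hLval 1 one_pos]
      have hint : IntegrableOn (ngG j k 1) (Ioi 1) := ngG_int hk0 hjk2 one_pos
      have hpos : 0 < ∫ s in Ioi 1, ngG j k 1 s := by
        have hnn : 0 ≤ᵐ[volume.restrict (Ioi (1:ℝ))] ngG j k 1 := by
          filter_upwards [ae_restrict_mem measurableSet_Ioi] with x hx
          exact ngG_nonneg zero_le_one x (le_of_lt (lt_trans one_pos (mem_Ioi.mp hx)))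
        rw [setIntegral_pos_iff_support_of_nonneg_ae hnn hint]
        have hsub : Ioi (1:ℝ) ⊆ Function.support (ngG j k 1) ∩ Ioi 1 := by
          intro x hx
          rw [mem_Ioi] at hx
          have hx0 : (0:ℝ) < x := lt_trans one_pos hx
          refine ⟨?_, hx⟩
          have hXp : 0 < Real.sqrt (x ^ (2*k) - (1:ℝ) ^ (2*k)) :=
            Real.sqrt_pos.mpr (ng_X_pos hk0 one_pos hx)
          have : 0 < ngG j k 1 x := by
            unfold ngG
            have h1 : (0:ℝ) < x ^ j := Real.rpow_pos_of_pos hx0 j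
            have h2 : (0:ℝ) < x ^ k := Real.rpow_pos_of_pos hx0 k
            have h3 : (0:ℝ) < (1:ℝ) ^ k := Real.rpow_pos_of_pos one_pos k
            positivity
          exact ne_of_gt this
        calc (0:ENNReal) < volume (Ioi (1:ℝ)) := by simp [Real.volume_Ioi]
          _ ≤ volume (Function.support (ngG j k 1) ∩ Ioi 1) := measure_mono hsub
      have hba : 0 < b / a := div_pos hb ha
      positivity
    have hc : 0 < k - j - 1 := by linarith
    have t1 : Tendsto (fun x : ℝ => (x⁻¹) ^ (k - j - 1) * L 1) (nhdsWithin (0:ℝ) (Ioi 0)) atTop :=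
      (((tendsto_rpow_atTop hc).comp tendsto_inv_nhdsGT_zero).atTop_mul_const hL1pos)
    apply t1.congr'
    filter_upwards [self_mem_nhdsWithin] with x hx
    rw [mem_Ioi] at hx
    have hform := (part2 x hx 1 one_pos).1
    rw [mul_one] at hform
    rw [hform, Real.inv_rpow hx.le, ← Real.rpow_neg hx.le, show -(k-j-1) = j+1-k by ring]
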